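/- Theorem: Let J be a {2, n−1}-torsion free Jordan ring (n ≥ 2) with a nontrivial idempotent e and Peirce decomposition J = J₁ ⊕ J_{1/2} ⊕ J₀, satisfying: (i) for a_i ∈ J_i (i = 1, 0), t a_i = 0 for all t ∈ J_{1/2} implies a_i = 0; (ii) for a₀ ∈ J₀, t a₀ = 0 for all t ∈ J₀ implies a₀ = 0; (iii) for a ∈ J_{1/2}, t a = 0 for all t ∈ J₀ implies a = 0. Then every n-multiplicative derivation d of J is additive. -/
import Mathlib

set_option linter.unusedSectionVars false

/-- Peirce 1-component relative to `e`: elements `x` with `e*x = x`. -/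
def peirce1 {J : Type*} [Mul J] (e : J) : Set J := {x | e * x = x}

/-- Peirce 1/2-component relative to `e`: elements `x` with `e*x = (1/2)x`, i.e. `e*x + e*x = x`. -/
def peirceHalf {J : Type*} [Mul J] [Add J] (e : J) : Set J := {x | e * x + e * x = x}

/-- Peirce 0-component relative to `e`: elements `x` with `e*x = 0`. -/
def peirce0 {J : Type*} [Mul J] [Zero J] (e : J) : Set J := {x | e * x = 0}

/-- The right-normed nonassociative monomial `x₁(x₂(⋯(x_{n-1}x_n)⋯))` on a list of arguments. -/
def rnm {J : Type*} [Mul J] [Zero J] : List J → J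
  | [] => 0
  | [x] => x
  | x :: y :: l => x * rnm (y :: l)

/-- `d` is an `n`-multiplicative derivation (w.r.t. the right-normed monomial of degree `n`):
`d(m(x₁,…,xₙ)) = Σᵢ m(x₁,…,d(xᵢ),…,xₙ)`. -/
def IsNDer {J : Type*} [NonUnitalNonAssocRing J] (n : ℕ) (d : J → J) : Prop :=
  ∀ l : List J, l.length = n →
    d (rnm l) = ∑ i ∈ Finset.range n, rnm (l.set i (d (l.getD i 0)))

section Helpers

variable {J : Type*} [NonUnitalNonAssocCommRing J]

private lemma eqc1 {a b c1 d1 : J} (m1 : ℤ) (h1 : c1 = d1)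
    (h : a - b = m1 • (c1 - d1)) : a = b := by
  rw [← sub_eq_zero, h, h1]; simp

private lemma eqc2 {a b c1 d1 c2 d2 : J} (m1 m2 : ℤ) (h1 : c1 = d1) (h2 : c2 = d2)
    (h : a - b = m1 • (c1 - d1) + m2 • (c2 - d2)) : a = b := by
  rw [← sub_eq_zero, h, h1, h2]; simp

private lemma eqc3 {a b c1 d1 c2 d2 c3 d3 : J} (m1 m2 m3 : ℤ)
    (h1 : c1 = d1) (h2 : c2 = d2) (h3 : c3 = d3)
    (h : a - b = m1 • (c1 - d1) + m2 • (c2 - d2) + m3 • (c3 - d3)) : a = b := by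
  rw [← sub_eq_zero, h, h1, h2, h3]; simp

private lemma cancel2 (h2 : ∀ x : J, x + x = 0 → x = 0) {a b : J} (h : a + a = b + b) : a = b := by
  have h' : (a - b) + (a - b) = 0 := by
    have : (a - b) + (a - b) = (a + a) - (b + b) := by abel
    rw [this, h, sub_self]
  exact sub_eq_zero.mp (h2 _ h')

end Helpers

section Peirce

variable {J : Type*} [NonUnitalNonAssocCommRing J] {e : J}

/-- Full linearization of the Jordan identity. -/
private lemma lin3 (hJordan : ∀ x y : J, ((x * x) * y) * x = (x * x) * (y * x))
    (h2 : ∀ x : J, x + x = 0 → x = 0) (x z w y : J) :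
    ((x*z)*y)*w + ((x*w)*y)*z + ((z*w)*y)*x
      = (x*z)*(y*w) + (x*w)*(y*z) + (z*w)*(y*x) := by
  have comb :
      (((x+z+w)*(x+z+w))*y)*(x+z+w) + ((x*x)*y)*x + ((z*z)*y)*z + ((w*w)*y)*w
        + ((x+z)*(x+z))*(y*(x+z)) + ((x+w)*(x+w))*(y*(x+w)) + ((z+w)*(z+w))*(y*(z+w))
      = ((x+z+w)*(x+z+w))*(y*(x+z+w)) + (x*x)*(y*x) + (z*z)*(y*z) + (w*w)*(y*w)
        + (((x+z)*(x+z))*y)*(x+z) + (((x+w)*(x+w))*y)*(x+w) + (((z+w)*(z+w))*y)*(z+w) := by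
    rw [hJordan (x+z+w) y, hJordan (x+z) y, hJordan (x+w) y, hJordan (z+w) y,
      hJordan x y, hJordan z y, hJordan w y]
  apply cancel2 h2
  have key :
      ((((x+z+w)*(x+z+w))*y)*(x+z+w) + ((x*x)*y)*x + ((z*z)*y)*z + ((w*w)*y)*w
        + ((x+z)*(x+z))*(y*(x+z)) + ((x+w)*(x+w))*(y*(x+w)) + ((z+w)*(z+w))*(y*(z+w)))
      - (((x+z+w)*(x+z+w))*(y*(x+z+w)) + (x*x)*(y*x) + (z*z)*(y*z) + (w*w)*(y*w)
        + (((x+z)*(x+z))*y)*(x+z) + (((x+w)*(x+w))*y)*(x+w) + (((z+w)*(z+w))*y)*(z+w))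
      = (((x*z)*y)*w + ((x*w)*y)*z + ((z*w)*y)*x
          + (((x*z)*y)*w + ((x*w)*y)*z + ((z*w)*y)*x))
        - ((x*z)*(y*w) + (x*w)*(y*z) + (z*w)*(y*x)
          + ((x*z)*(y*w) + (x*w)*(y*z) + (z*w)*(y*x))) := by
    simp only [add_mul, mul_add]
    rw [mul_comm z x, mul_comm w x, mul_comm w z]
    abel
  rw [comb, sub_self] at key
  have key' := key.symm
  rw [sub_eq_zero] at key'
  calc ((x*z)*y)*w + ((x*w)*y)*z + ((z*w)*y)*x
        + (((x*z)*y)*w + ((x*w)*y)*z + ((z*w)*y)*x)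
      = (x*z)*(y*w) + (x*w)*(y*z) + (z*w)*(y*x)
        + ((x*z)*(y*w) + (x*w)*(y*z) + (z*w)*(y*x)) := key'
    _ = _ := by abel


private lemma I1 (hJordan : ∀ x y : J, ((x * x) * y) * x = (x * x) * (y * x))
    (h2 : ∀ x : J, x + x = 0 → x = 0) (hid : e * e = e) (w y : J) :
    (e*y)*w + ((e*w)*y)*e + ((e*w)*y)*e
      = e*(y*w) + (e*w)*(y*e) + (e*w)*(y*e) := by
  have h := lin3 hJordan h2 e e w y
  rwa [hid] at h

private lemma keyL (hJordan : ∀ x y : J, ((x * x) * y) * x = (x * x) * (y * x))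
    (h2 : ∀ x : J, x + x = 0 → x = 0) (hid : e * e = e) (z : J) :
    e*z + e*(e*(e*z)) + e*(e*(e*z)) = e*(e*z) + e*(e*z) + e*(e*z) := by
  have h := I1 hJordan h2 hid z e
  rw [hid, mul_comm (e*z) e] at h
  rw [mul_comm (e*(e*z)) e] at h
  exact h

/-- Peirce projections. -/
def pOne (e x : J) : J := (e*(e*x) + e*(e*x)) - e*x

def pHalf (e x : J) : J :=
  ((e*x + e*x) + (e*x + e*x)) - ((e*(e*x) + e*(e*x)) + (e*(e*x) + e*(e*x)))

def pZero (e x : J) : J := (x + (e*(e*x) + e*(e*x))) - (e*x + e*x + e*x)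

lemma pSum (e x : J) : pOne e x + pHalf e x + pZero e x = x := by
  unfold pOne pHalf pZero; abel

lemma pOne_add (e x y : J) : pOne e (x + y) = pOne e x + pOne e y := by
  unfold pOne; simp only [mul_add]; abel

lemma pHalf_add (e x y : J) : pHalf e (x + y) = pHalf e x + pHalf e y := by
  unfold pHalf; simp only [mul_add]; abel

lemma pZero_add (e x y : J) : pZero e (x + y) = pZero e x + pZero e y := by
  unfold pZero; simp only [mul_add]; abel

section WithJordan

variable (hJordan : ∀ x y : J, ((x * x) * y) * x = (x * x) * (y * x))
variable (h2 : ∀ x : J, x + x = 0 → x = 0)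
variable (hid : e * e = e)
include hJordan h2 hid

lemma pOne_mem (x : J) : pOne e x ∈ peirce1 e := by
  show e * pOne e x = pOne e x
  exact eqc1 1 (keyL hJordan h2 hid x) (by unfold pOne; simp only [mul_sub, mul_add]; abel)

lemma pHalf_mem (x : J) : pHalf e x ∈ peirceHalf e := by
  show e * pHalf e x + e * pHalf e x = pHalf e x
  exact eqc1 (-4) (keyL hJordan h2 hid x) (by unfold pHalf; simp only [mul_sub, mul_add]; abel)

lemma pZero_mem (x : J) : pZero e x ∈ peirce0 e := by
  show e * pZero e x = 0
  exact eqc1 1 (keyL hJordan h2 hid x) (by unfold pZero; simp only [mul_sub, mul_add]; abel)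

end WithJordan

/- values of the projections on the components -/

lemma pOne_val {x : J} (hx : e * x = x) : pOne e x = x := by
  unfold pOne; simp only [hx]; abel

lemma pOne_val_h {x : J} (hx : e * x + e * x = x) : pOne e x = 0 := by
  have h2x : e*(e*x) + e*(e*x) = e*x := by rw [← mul_add, hx]
  unfold pOne; rw [h2x, sub_self]

lemma pOne_val_0 {x : J} (hx : e * x = 0) : pOne e x = 0 := by
  unfold pOne; simp [hx]

lemma pHalf_val {x : J} (hx : e * x + e * x = x) : pHalf e x = x := by
  have h2x : e*(e*x) + e*(e*x) = e*x := by rw [← mul_add, hx]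
  unfold pHalf; rw [h2x, hx]
  abel

lemma pHalf_val_1 {x : J} (hx : e * x = x) : pHalf e x = 0 := by
  unfold pHalf; simp only [hx]; abel

lemma pHalf_val_0 {x : J} (hx : e * x = 0) : pHalf e x = 0 := by
  unfold pHalf; simp [hx]

lemma pZero_val {x : J} (hx : e * x = 0) : pZero e x = x := by
  unfold pZero; simp [hx]

lemma pZero_val_1 {x : J} (hx : e * x = x) : pZero e x = 0 := by
  unfold pZero; simp only [hx]; abel

lemma pZero_val_h {x : J} (hx : e * x + e * x = x) : pZero e x = 0 := by
  have h2x : e*(e*x) + e*(e*x) = e*x := by rw [← mul_add, hx]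
  unfold pZero; rw [h2x]
  exact eqc1 (-1) hx (by abel)

/- closure lemmas -/

lemma p1_add' {x y : J} (hx : x ∈ peirce1 e) (hy : y ∈ peirce1 e) : x + y ∈ peirce1 e := by
  show e * (x+y) = x + y
  rw [mul_add, hx, hy]

lemma ph_add' {x y : J} (hx : x ∈ peirceHalf e) (hy : y ∈ peirceHalf e) :
    x + y ∈ peirceHalf e := by
  have hx' : e*x + e*x = x := hx
  have hy' : e*y + e*y = y := hy
  show e * (x+y) + e * (x+y) = x + y
  rw [mul_add]
  exact eqc2 1 1 hx' hy' (by abel)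

lemma p0_add' {x y : J} (hx : x ∈ peirce0 e) (hy : y ∈ peirce0 e) : x + y ∈ peirce0 e := by
  have hx' : e*x = 0 := hx
  have hy' : e*y = 0 := hy
  show e * (x+y) = 0
  rw [mul_add, hx', hy', add_zero]

lemma ph_zero : (0 : J) ∈ peirceHalf e := by
  show e * 0 + e * 0 = 0; simp

lemma p0_zero : (0 : J) ∈ peirce0 e := by
  show e * (0:J) = 0; simp

lemma p1_zero : (0 : J) ∈ peirce1 e := by
  show e * (0:J) = 0; simp

lemma ph_neg {x : J} (hx : x ∈ peirceHalf e) : -x ∈ peirceHalf e := by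
  have hx' : e*x + e*x = x := hx
  show e * (-x) + e * (-x) = -x
  rw [mul_neg, ← neg_add, hx']

lemma ph_L {x : J} (hx : x ∈ peirceHalf e) : e * x ∈ peirceHalf e := by
  have hx' : e*x + e*x = x := hx
  show e * (e*x) + e * (e*x) = e*x
  rw [← mul_add, hx']

/-- doubling is inverse to L on the half component -/
lemma ph_two_L {x : J} (hx : x ∈ peirceHalf e) : e * (x + x) = x := by
  have hx' : e*x + e*x = x := hx
  rw [mul_add, hx']

/- uniqueness of decompositions -/
lemma uniq3 {a t b : J} (ha : a ∈ peirce1 e) (ht : t ∈ peirceHalf e) (hb : b ∈ peirce0 e)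
    (h : a + t + b = 0) : a = 0 ∧ t = 0 ∧ b = 0 := by
  have ha' : e*a = a := ha
  have ht' : e*t + e*t = t := ht
  have hb' : e*b = 0 := hb
  have h1 : a + e*t = 0 := by
    have := congrArg (fun z => e * z) h
    simp only [mul_add, ha', hb', mul_zero] at this
    rw [← this]; abel
  have h1' : a + e*(e*t) = 0 := by
    have := congrArg (fun z => e * z) h1
    simp only [mul_add, ha', mul_zero] at this
    rw [← this]
  have hLt : e*t = e*(e*t) := by
    have : (a + e*t) - (a + e*(e*t)) = 0 := by rw [h1, h1', sub_self]
    have h' : e*t - e*(e*t) = 0 := by rw [← this]; abel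
    exact sub_eq_zero.mp h'
  have h2t : e*(e*t) + e*(e*t) = e*t := by rw [← mul_add, ht']
  have hLt0 : e * t = 0 := by
    have h3 := h2t
    rw [← hLt] at h3
    have h4 : e*t + e*t = 0 + e*t := by rw [zero_add]; exact h3
    exact add_right_cancel h4
  have ht0 : t = 0 := by rw [← ht', hLt0, add_zero]
  have ha0 : a = 0 := by rw [← h1, hLt0, add_zero]
  refine ⟨ha0, ht0, ?_⟩
  rw [ha0, ht0] at h; simpa using h


section Products

variable (hJordan : ∀ x y : J, ((x * x) * y) * x = (x * x) * (y * x))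
variable (h2 : ∀ x : J, x + x = 0 → x = 0)
variable (hid : e * e = e)
include hJordan h2 hid

/-- J₁ · J₁ ⊆ J₁ -/
lemma p11 {a b : J} (ha : a ∈ peirce1 e) (hb : b ∈ peirce1 e) : a * b ∈ peirce1 e := by
  have ha' : e*a = a := ha
  have hb' : e*b = b := hb
  have h := I1 hJordan h2 hid a b
  rw [ha', mul_comm b e, hb', mul_comm b a, mul_comm (a*b) e] at h
  -- h : a*b + e*(a*b) + e*(a*b) = e*(a*b) + a*b + a*b
  show e * (a*b) = a * b
  exact eqc1 1 h (by abel)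

/-- J₁ · J₀ = 0 -/
lemma p10 {a c : J} (ha : a ∈ peirce1 e) (hc : c ∈ peirce0 e) : a * c = 0 := by
  have ha' : e*a = a := ha
  have hc' : e*c = 0 := hc
  have h1 := I1 hJordan h2 hid a c
  rw [ha', hc', zero_mul, mul_comm c e, hc', mul_zero, mul_comm c a, mul_comm (a*c) e] at h1
  -- h1 : 0 + e*(a*c) + e*(a*c) = e*(a*c) + 0 + 0
  have hL : e*(a*c) = 0 := eqc1 1 h1 (by abel)
  have h2' := I1 hJordan h2 hid c a
  rw [ha', hc', zero_mul, zero_mul, mul_comm a e, ha'] at h2'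
  -- h2' : a*c + 0 + 0 = e*(a*c) + 0*(a*e)...
  rw [hL] at h2'
  simp only [zero_mul, mul_zero] at h2'
  exact eqc1 1 h2' (by abel)

/-- J₀ · J₀ ⊆ J₀ -/
lemma p00 {c c' : J} (hc : c ∈ peirce0 e) (hc' : c' ∈ peirce0 e) : c * c' ∈ peirce0 e := by
  have h := I1 hJordan h2 hid c c'
  have hc0 : e*c = 0 := hc
  have hc0' : e*c' = 0 := hc'
  rw [hc0, hc0', zero_mul, zero_mul, zero_mul, mul_comm c' c] at h
  simp only [zero_mul, mul_zero] at h
  show e * (c * c') = 0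
  exact eqc1 (-1) h (by abel)

/-- J₁ · J½ ⊆ J½ -/
lemma p1h {a t : J} (ha : a ∈ peirce1 e) (ht : t ∈ peirceHalf e) : a * t ∈ peirceHalf e := by
  have ha' : e*a = a := ha
  have ht' : e*t + e*t = t := ht
  have h := I1 hJordan h2 hid a t
  rw [ha', mul_comm t e, mul_comm t a, mul_comm (a*t) e, mul_comm (e*t) a] at h
  -- h : a*(e*t) + e*(a*t) + e*(a*t) = e*(a*t) + a*(e*t) + a*(e*t)
  have hL : e*(a*t) = a*(e*t) := eqc1 1 h (by abel)
  show e * (a*t) + e * (a*t) = a * t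
  rw [hL, ← mul_add, ht']

/-- J₀ · J½ ⊆ J½ -/
lemma p0h {c t : J} (hc : c ∈ peirce0 e) (ht : t ∈ peirceHalf e) : c * t ∈ peirceHalf e := by
  have hc' : e*c = 0 := hc
  have ht' : e*t + e*t = t := ht
  have h := I1 hJordan h2 hid c t
  rw [hc', zero_mul, zero_mul, mul_comm t c] at h
  simp only [zero_mul, mul_zero] at h
  have hL : (e*t)*c = e*(c*t) := eqc1 1 h (by abel)
  show e * (c*t) + e * (c*t) = c * t
  rw [← hL, ← add_mul, ht', mul_comm t c]

/-- J½ · J½ ⊆ J₁ ⊕ J₀ -/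
lemma phh {t s : J} (ht : t ∈ peirceHalf e) (hs : s ∈ peirceHalf e) :
    pHalf e (t * s) = 0 := by
  have ht' : e*t + e*t = t := ht
  have hs' : e*s + e*s = s := hs
  have l := lin3 hJordan h2 t s e e
  rw [hid, mul_comm t e, mul_comm s e, mul_comm (t*s) e,
    mul_comm (e*t) e, mul_comm (e*s) e, mul_comm (e*(t*s)) e,
    mul_comm (e*s) (e*t)] at l
  -- l : e*(e*(t*s)) + (e*(e*t))*s + (e*(e*s))*t = e*(t*s) + (e*t)*(e*s) + (e*t)*(e*s)
  have hB : (e*(e*t))*s + (e*(e*t))*s = (e*t)*s := by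
    rw [← add_mul, ← mul_add, ht']
  have hG1 : (e*t)*s + (e*t)*s = t*s := by rw [← add_mul, ht']
  have hC : (e*(e*s))*t + (e*(e*s))*t = (e*s)*t := by
    rw [← add_mul, ← mul_add, hs']
  have hG2 : (e*s)*t + (e*s)*t = t*s := by rw [← add_mul, hs', mul_comm s t]
  have hF : (e*t)*(e*s) + (e*t)*(e*s) = t*(e*s) := by rw [← add_mul, ht']
  have hH : t*(e*s) + t*(e*s) = t*s := by rw [← mul_add, hs']
  unfold pHalf
  rw [← sub_eq_zero] at l hB hG1 hC hG2 hF hH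
  refine eqc1 1 (c1 := (0:J)) (d1 := 0) rfl ?_
  have comb : ((e*(t*s) + e*(t*s)) + (e*(t*s) + e*(t*s)))
      - ((e*(e*(t*s)) + e*(e*(t*s))) + (e*(e*(t*s)) + e*(e*(t*s))))
      = (-4 : ℤ) • (e*(e*(t*s)) + (e*(e*t))*s + (e*(e*s))*t - (e*(t*s) + (e*t)*(e*s) + (e*t)*(e*s)))
        + (2 : ℤ) • ((e*(e*t))*s + (e*(e*t))*s - (e*t)*s)
        + (1 : ℤ) • ((e*t)*s + (e*t)*s - t*s)
        + (2 : ℤ) • ((e*(e*s))*t + (e*(e*s))*t - (e*s)*t)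
        + (1 : ℤ) • ((e*s)*t + (e*s)*t - t*s)
        + (-4 : ℤ) • ((e*t)*(e*s) + (e*t)*(e*s) - t*(e*s))
        + (-2 : ℤ) • (t*(e*s) + t*(e*s) - t*s) := by abel
  rw [l, hB, hG1, hC, hG2, hF, hH] at comb
  simp only [smul_zero, add_zero, zero_add] at comb
  rw [comb]
  simp

end Products

end Peirce

section Words

variable {J : Type*} [NonUnitalNonAssocCommRing J]

lemma rnm_cons (x : J) {l : List J} (h : l ≠ []) : rnm (x :: l) = x * rnm l := by
  cases l with
  | nil => simp at h
  | cons y t => rfl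

lemma rnm_cons_zero (l : List J) : rnm ((0 : J) :: l) = 0 := by
  cases l with
  | nil => rfl
  | cons y t => show 0 * _ = 0; rw [zero_mul]

lemma rnm_last_add (l : List J) (x y : J) :
    rnm (l ++ [x + y]) = rnm (l ++ [x]) + rnm (l ++ [y]) := by
  induction l with
  | nil => rfl
  | cons a l ih =>
      rw [List.cons_append, List.cons_append, List.cons_append,
        rnm_cons _ (by simp), rnm_cons _ (by simp), rnm_cons _ (by simp), ih, mul_add]

lemma rnm_last_sub (l : List J) (x y : J) :
    rnm (l ++ [x - y]) = rnm (l ++ [x]) - rnm (l ++ [y]) := by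
  induction l with
  | nil => rfl
  | cons a l ih =>
      rw [List.cons_append, List.cons_append, List.cons_append,
        rnm_cons _ (by simp), rnm_cons _ (by simp), rnm_cons _ (by simp), ih, mul_sub]

lemma rnm_last_zero (l : List J) : rnm (l ++ [(0 : J)]) = 0 := by
  induction l with
  | nil => rfl
  | cons a l ih => rw [List.cons_append, rnm_cons _ (by simp), ih, mul_zero]

lemma rnm_last_nsmul (l : List J) (m : ℕ) (x : J) :
    rnm (l ++ [m • x]) = m • rnm (l ++ [x]) := by
  induction m with
  | zero => simp [rnm_last_zero]
  | succ m ih => rw [succ_nsmul, rnm_last_add, ih, succ_nsmul]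

/-- The fundamental transfer identity: the derivation property turns sums in the last
slot of a fixed word into the word applied to the additivity defect. -/
lemma tchain {n : ℕ} {d : J → J} (hder : IsNDer n d) (g : List J) (hg : g.length + 1 = n)
    (x y : J) :
    d (rnm (g ++ [x]) + rnm (g ++ [y])) - d (rnm (g ++ [x])) - d (rnm (g ++ [y]))
      = rnm (g ++ [d (x + y) - d x - d y]) := by
  have key : ∀ z : J, d (rnm (g ++ [z]))
      = (∑ i ∈ Finset.range g.length, rnm ((g.set i (d (g.getD i 0))) ++ [z]))
        + rnm (g ++ [d z]) := by
    intro z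
    have h := hder (g ++ [z]) (by simp [← hg])
    rw [h, ← hg, Finset.sum_range_succ]
    congr 1
    · apply Finset.sum_congr rfl
      intro i hi
      have hi' : i < g.length := Finset.mem_range.mp hi
      rw [List.getD_append _ _ _ _ hi', List.set_append_left _ _ hi']
    · rw [List.getD_append_right _ _ _ _ (le_refl _), List.set_append_right _ _ (le_refl _)]
      simp
  rw [← rnm_last_add, key (x + y), key x, key y]
  simp only [rnm_last_add, Finset.sum_add_distrib]
  rw [rnm_last_sub, rnm_last_sub]
  abel

lemma rep_cons (e : J) (k : ℕ) (z : J) :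
    rnm (List.replicate (k+1) e ++ [z]) = e * rnm (List.replicate k e ++ [z]) := by
  rw [List.replicate_succ, List.cons_append, rnm_cons _ (by simp)]

lemma rep_nil (e z : J) : rnm (List.replicate 0 e ++ [z]) = z := rfl

end Words

section WordEval

variable {J : Type*} [NonUnitalNonAssocCommRing J] {e : J}
variable (hJordan : ∀ x y : J, ((x * x) * y) * x = (x * x) * (y * x))
variable (h2 : ∀ x : J, x + x = 0 → x = 0)
variable (hid : e * e = e)

lemma rep_p1 (k : ℕ) {a : J} (ha : a ∈ peirce1 e) :
    rnm (List.replicate k e ++ [a]) = a := by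
  induction k with
  | zero => rfl
  | succ k ih => rw [rep_cons, ih]; exact ha

include hid in
lemma rep_e (k : ℕ) : rnm (List.replicate k e ++ [e]) = e :=
  rep_p1 k hid

lemma rep_p0 (k : ℕ) {c : J} (hc : c ∈ peirce0 e) :
    rnm (List.replicate (k+1) e ++ [c]) = 0 := by
  induction k with
  | zero => rw [rep_cons]; exact hc
  | succ k ih => rw [rep_cons, ih, mul_zero]

include hJordan h2 hid in
lemma rep_ph (k : ℕ) {t : J} (ht : t ∈ peirceHalf e) :
    rnm (List.replicate k e ++ [t]) ∈ peirceHalf e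
      ∧ (2^k) • rnm (List.replicate k e ++ [t]) = t := by
  induction k with
  | zero =>
      constructor
      · exact ht
      · show (1 : ℕ) • rnm ([] ++ [t]) = t; simp [rnm]
  | succ k ih =>
      rw [rep_cons]
      set Y := rnm (List.replicate k e ++ [t]) with hY
      have hY2 : e*Y + e*Y = Y := ih.1
      constructor
      · exact ph_L ih.1
      · rw [pow_succ, mul_comm (2^k) 2, mul_smul, two_smul, ← smul_add, hY2]
        exact ih.2

include hJordan h2 hid in
lemma rep_ph_surj (k : ℕ) {t : J} (ht : t ∈ peirceHalf e) :
    rnm (List.replicate k e ++ [(2^k) • t]) = t := by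
  cases k with
  | zero => show rnm ([] ++ [(1:ℕ) • t]) = t; simp [rnm]
  | succ k =>
    rw [rep_cons, rnm_last_nsmul]
    have hRh := rep_ph hJordan h2 hid k ht
    rw [pow_succ', mul_smul, hRh.2, two_smul]
    exact ph_two_L ht

end WordEval

section Chains

variable {J : Type*} [NonUnitalNonAssocCommRing J] {e : J}
variable (hJordan : ∀ x y : J, ((x * x) * y) * x = (x * x) * (y * x))
variable (h2 : ∀ x : J, x + x = 0 → x = 0)
variable (hid : e * e = e)
include hJordan h2 hid

lemma chain_p0 {g : List J} (hg : ∀ x ∈ g, x ∈ peirce0 e) {z : J} (hz : z ∈ peirce0 e) :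
    rnm (g ++ [z]) ∈ peirce0 e := by
  induction g with
  | nil => exact hz
  | cons c g ih =>
      rw [List.cons_append, rnm_cons _ (by simp)]
      exact p00 hJordan h2 hid (hg c (by simp)) (ih (fun x hx => hg x (by simp [hx])))

lemma chain_ph {g : List J} (hg : ∀ x ∈ g, x ∈ peirce0 e) {z : J} (hz : z ∈ peirceHalf e) :
    rnm (g ++ [z]) ∈ peirceHalf e := by
  induction g with
  | nil => exact hz
  | cons c g ih =>
      rw [List.cons_append, rnm_cons _ (by simp)]
      exact p0h hJordan h2 hid (hg c (by simp)) (ih (fun x hx => hg x (by simp [hx])))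

lemma chain_p1 {g : List J} (hne : g ≠ []) (hg : ∀ x ∈ g, x ∈ peirce0 e) {a : J}
    (ha : a ∈ peirce1 e) : rnm (g ++ [a]) = 0 := by
  induction g with
  | nil => exact absurd rfl hne
  | cons c g ih =>
      rw [List.cons_append, rnm_cons _ (by simp)]
      cases g with
      | nil =>
          show c * rnm ([] ++ [a]) = 0
          show c * a = 0
          rw [mul_comm]
          exact p10 hJordan h2 hid ha (hg c (by simp))
      | cons c' g' =>
          rw [ih (by simp) (fun x hx => hg x (by simp [hx])), mul_zero]

end Chains

/-- The additivity defect of `d`. -/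
def dft {J : Type*} [NonUnitalNonAssocCommRing J] (d : J → J) (x y : J) : J :=
  d (x + y) - d x - d y

section Dft

variable {J : Type*} [NonUnitalNonAssocCommRing J]

lemma dft_comm (d : J → J) (x y : J) : dft d x y = dft d y x := by
  unfold dft; rw [add_comm]; abel

lemma dft_split (d : J → J) (x y1 y0 : J) :
    dft d x (y1 + y0) = dft d x y1 + dft d (x + y1) y0 - dft d y1 y0 := by
  unfold dft
  rw [← add_assoc]
  abel

lemma dft_cocycle (d : J → J) (x y z : J) :
    dft d x y + dft d (x + y) z = dft d y z + dft d x (y + z) := by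
  unfold dft
  rw [← add_assoc]
  abel

lemma add_of_dft_zero {d : J → J} {x y : J} (h : dft d x y = 0) : d (x + y) = d x + d y := by
  unfold dft at h
  have := sub_eq_zero.mp (by rw [← h]; abel : d (x+y) - (d x + d y) = 0)
  exact this

lemma dtransfer {n : ℕ} {d : J → J} (hder : IsNDer n d) (g : List J) (hg : g.length + 1 = n)
    (x y : J) :
    dft d (rnm (g ++ [x])) (rnm (g ++ [y])) = rnm (g ++ [dft d x y]) := by
  unfold dft
  rw [← rnm_last_add]
  have := tchain hder g hg x y
  rw [← rnm_last_add] at this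
  exact this

end Dft

section MoreHelpers

variable {J : Type*} [NonUnitalNonAssocCommRing J] {e : J}

lemma parts_zero {w : J} (h1 : pOne e w = 0) (hh : pHalf e w = 0) (h0 : pZero e w = 0) :
    w = 0 := by
  have := pSum e w
  rw [h1, hh, h0] at this
  simpa using this.symm

lemma eq_pOne_of {w : J} (hh : pHalf e w = 0) (h0 : pZero e w = 0) : w = pOne e w := by
  have := pSum e w
  rw [hh, h0, add_zero, add_zero] at this
  exact this.symm

lemma eq_pZero_of {w : J} (h1 : pOne e w = 0) (hh : pHalf e w = 0) : w = pZero e w := by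
  have := pSum e w
  rw [h1, hh, add_zero, zero_add] at this
  exact this.symm

lemma pair_sum_of_ph {w : J} (hh : pHalf e w = 0) : w = pOne e w + pZero e w := by
  have := pSum e w
  rw [hh, add_zero] at this
  exact this.symm

lemma ph_nsmul {t : J} (ht : t ∈ peirceHalf e) (m : ℕ) : m • t ∈ peirceHalf e := by
  induction m with
  | zero => simpa using (ph_zero (e := e))
  | succ m ih => rw [succ_nsmul]; exact ph_add' ih ht

lemma half_eq_dsum_zero {A B w : J} (hA : A ∈ peirce1 e) (hB : B ∈ peirce0 e)
    (hw : w ∈ peirceHalf e) (h : w = A + B) : w = 0 := by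
  have h0 : A + (-w) + B = 0 := by rw [h]; abel
  have hu := uniq3 hA (ph_neg hw) hB h0
  have := hu.2.1
  rwa [neg_eq_zero] at this

lemma uniq_1h {a t : J} (ha : a ∈ peirce1 e) (ht : t ∈ peirceHalf e) (h : a + t = 0) :
    a = 0 ∧ t = 0 := by
  have hu := uniq3 ha ht (p0_zero (e := e)) (by rw [add_zero]; exact h)
  exact ⟨hu.1, hu.2.1⟩

lemma uniq_h0 {t b : J} (ht : t ∈ peirceHalf e) (hb : b ∈ peirce0 e) (h : t + b = 0) :
    t = 0 ∧ b = 0 := by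
  have hu := uniq3 (p1_zero (e := e)) ht hb (by rw [zero_add]; exact h)
  exact ⟨hu.2.1, hu.2.2⟩

end MoreHelpers

theorem nDer_additive {n : ℕ} (hn : 2 ≤ n) {J : Type*} [NonUnitalNonAssocCommRing J]
    (hJordan : ∀ x y : J, ((x * x) * y) * x = (x * x) * (y * x))
    (h2 : ∀ x : J, x + x = 0 → x = 0)
    (hn1 : ∀ x : J, (n - 1) • x = 0 → x = 0)
    (e : J) (hid : e * e = e) (hne : e ≠ 0) (hnu : ∃ x : J, e * x ≠ x)
    (hcond1 : ∀ a ∈ peirce1 e, (∀ t ∈ peirceHalf e, t * a = 0) → a = 0)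
    (hcond1' : ∀ a ∈ peirce0 e, (∀ t ∈ peirceHalf e, t * a = 0) → a = 0)
    (hcond2 : ∀ a ∈ peirce0 e, (∀ t ∈ peirce0 e, t * a = 0) → a = 0)
    (hcond3 : ∀ a ∈ peirceHalf e, (∀ t ∈ peirce0 e, t * a = 0) → a = 0)
    (d : J → J) (hder : IsNDer n d) :
    ∀ a b : J, d (a + b) = d a + d b := by
  obtain ⟨k, rfl⟩ : ∃ k, n = k + 2 := ⟨n - 2, by omega⟩
  have he1 : e ∈ peirce1 e := hid
  -- d 0 = 0
  have hd0 : d 0 = 0 := by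
    have h := hder (List.replicate (k+2) 0) (by simp)
    have hl : rnm (List.replicate (k+2) (0:J)) = 0 := by
      rw [List.replicate_succ]; exact rnm_cons_zero _
    rw [hl] at h
    rw [h]
    apply Finset.sum_eq_zero
    intro i _
    rw [List.replicate_succ, List.replicate_succ]
    cases i with
    | zero =>
        show rnm (d _ :: (0 :: List.replicate k 0)) = 0
        rw [rnm_cons _ (by simp), rnm_cons_zero, mul_zero]
    | succ j =>
        show rnm ((0:J) :: (((0:J) :: List.replicate k 0).set j (d _))) = 0
        exact rnm_cons_zero _
  have dft0r : ∀ x : J, dft d x 0 = 0 := by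
    intro x; unfold dft; rw [add_zero, hd0, sub_zero, sub_self]
  have dft0l : ∀ x : J, dft d 0 x = 0 := by
    intro x; rw [dft_comm]; exact dft0r x
  -- transfer
  have dtr : ∀ (g : List J), g.length = k + 1 → ∀ x y : J,
      dft d (rnm (g ++ [x])) (rnm (g ++ [y])) = rnm (g ++ [dft d x y]) := by
    intro g hg x y
    exact dtransfer hder g (by omega) x y
  -- peeling lemmas
  have peel0 : ∀ (m : ℕ) (z : J), z ∈ peirce0 e →
      (∀ g : List J, g.length = m → (∀ x ∈ g, x ∈ peirce0 e) → rnm (g ++ [z]) = 0) →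
      z = 0 := by
    intro m
    induction m with
    | zero =>
        intro z _ h
        have := h [] rfl (by simp)
        simpa [rnm] using this
    | succ m ih =>
        intro z hz h
        apply ih z hz
        intro g hg hgmem
        apply hcond2 _ (chain_p0 hJordan h2 hid hgmem hz)
        intro c hc
        have hc' := h (c :: g) (by simp [hg]) (by
          intro x hx
          rcases List.mem_cons.mp hx with h' | h'
          · rwa [h']
          · exact hgmem x h')
        rwa [List.cons_append, rnm_cons _ (by simp)] at hc'
  have peelH : ∀ (m : ℕ) (z : J), z ∈ peirceHalf e →
      (∀ g : List J, g.length = m → (∀ x ∈ g, x ∈ peirce0 e) → rnm (g ++ [z]) = 0) →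
      z = 0 := by
    intro m
    induction m with
    | zero =>
        intro z _ h
        have := h [] rfl (by simp)
        simpa [rnm] using this
    | succ m ih =>
        intro z hz h
        apply ih z hz
        intro g hg hgmem
        apply hcond3 _ (chain_ph hJordan h2 hid hgmem hz)
        intro c hc
        have hc' := h (c :: g) (by simp [hg]) (by
          intro x hx
          rcases List.mem_cons.mp hx with h' | h'
          · rwa [h']
          · exact hgmem x h')
        rwa [List.cons_append, rnm_cons _ (by simp)] at hc'
  -- component extraction from the e-chain
  have compE : ∀ w : J, rnm (List.replicate (k+1) e ++ [w]) = 0 →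
      pOne e w = 0 ∧ pHalf e w = 0 := by
    intro w h
    rw [← pSum e w, rnm_last_add, rnm_last_add] at h
    rw [rep_p1 (k+1) (pOne_mem hJordan h2 hid w),
      rep_p0 k (pZero_mem hJordan h2 hid w), add_zero] at h
    have hY := rep_ph hJordan h2 hid (k+1) (pHalf_mem hJordan h2 hid w)
    have hu := uniq_1h (pOne_mem hJordan h2 hid w) hY.1 h
    refine ⟨hu.1, ?_⟩
    have := hY.2
    rw [hu.2, smul_zero] at this
    exact this.symm
  -- component extraction from J₀-chains
  have compC : ∀ w : J,
      (∀ g : List J, g.length = k + 1 → (∀ x ∈ g, x ∈ peirce0 e) → rnm (g ++ [w]) = 0) →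
      pHalf e w = 0 ∧ pZero e w = 0 := by
    intro w h
    have key : ∀ g : List J, g.length = k + 1 → (∀ x ∈ g, x ∈ peirce0 e) →
        rnm (g ++ [pHalf e w]) = 0 ∧ rnm (g ++ [pZero e w]) = 0 := by
      intro g hg hgmem
      have hne' : g ≠ [] := by intro h'; rw [h'] at hg; simp at hg
      have h' := h g hg hgmem
      rw [← pSum e w, rnm_last_add, rnm_last_add,
        chain_p1 hJordan h2 hid hne' hgmem (pOne_mem hJordan h2 hid w), zero_add] at h'
      exact uniq_h0 (chain_ph hJordan h2 hid hgmem (pHalf_mem hJordan h2 hid w))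
        (chain_p0 hJordan h2 hid hgmem (pZero_mem hJordan h2 hid w)) h'
    constructor
    · exact peelH (k+1) _ (pHalf_mem hJordan h2 hid w)
        (fun g hg hm => (key g hg hm).1)
    · exact peel0 (k+1) _ (pZero_mem hJordan h2 hid w)
        (fun g hg hm => (key g hg hm).2)
  -- (½,·,J₁)-defects have no ½- or 0-part
  have lemA : ∀ a X : J, a ∈ peirce1 e →
      pHalf e (dft d a X) = 0 ∧ pZero e (dft d a X) = 0 := by
    intro a X ha
    apply compC
    intro g hg hgmem
    have hne' : g ≠ [] := by intro h'; rw [h'] at hg; simp at hg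
    rw [← dtr g hg a X, chain_p1 hJordan h2 hid hne' hgmem ha]
    exact dft0l _
  have lemB : ∀ b X : J, b ∈ peirce0 e →
      pOne e (dft d b X) = 0 ∧ pHalf e (dft d b X) = 0 := by
    intro b X hb
    apply compE
    rw [← dtr _ (by simp) b X, rep_p0 k hb]
    exact dft0l _
  -- (1,0)-defects vanish
  have D10 : ∀ a c : J, a ∈ peirce1 e → c ∈ peirce0 e → dft d a c = 0 := by
    intro a c ha hc
    have hA := lemA a c ha
    have hB := lemB c a hc
    rw [dft_comm d c a] at hB
    exact parts_zero hB.1 hA.1 hA.2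
  -- (1,½)-defects vanish
  have D1h : ∀ a t : J, a ∈ peirce1 e → t ∈ peirceHalf e → dft d a t = 0 := by
    intro a t ha ht
    have hparts := lemA a t ha
    have hwe : dft d a t = pOne e (dft d a t) := eq_pOne_of hparts.1 hparts.2
    have hwmem : dft d a t ∈ peirce1 e := by
      rw [hwe]; exact pOne_mem hJordan h2 hid _
    apply hcond1 _ hwmem
    intro s hs
    have hlen : (s :: List.replicate k e).length = k + 1 := by simp
    have htr := dtr (s :: List.replicate k e) hlen a t
    have hval : ∀ z : J, rnm ((s :: List.replicate k e) ++ [z])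
        = s * rnm (List.replicate k e ++ [z]) := by
      intro z; rw [List.cons_append, rnm_cons _ (by simp)]
    simp only [hval] at htr
    rw [rep_p1 k hwmem, rep_p1 k ha] at htr
    -- htr : dft d (s*a) (s * rnm(rep k ++ [t])) = s * dft d a t
    have hTmem : rnm (List.replicate k e ++ [t]) ∈ peirceHalf e :=
      (rep_ph hJordan h2 hid k ht).1
    have hXmem : s * a ∈ peirceHalf e := by
      rw [mul_comm]; exact p1h hJordan h2 hid ha hs
    have hYph : pHalf e (s * rnm (List.replicate k e ++ [t])) = 0 :=
      phh hJordan h2 hid hs hTmem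
    rw [pair_sum_of_ph hYph, dft_split,
      D10 _ _ (pOne_mem hJordan h2 hid _) (pZero_mem hJordan h2 hid _), sub_zero] at htr
    have hA'mem : dft d (s * a) (pOne e (s * rnm (List.replicate k e ++ [t]))) ∈ peirce1 e := by
      rw [dft_comm]
      have h1 := lemA (pOne e (s * rnm (List.replicate k e ++ [t]))) (s * a)
        (pOne_mem hJordan h2 hid _)
      rw [eq_pOne_of h1.1 h1.2]
      exact pOne_mem hJordan h2 hid _
    have hB'mem : dft d (s * a + pOne e (s * rnm (List.replicate k e ++ [t])))
        (pZero e (s * rnm (List.replicate k e ++ [t]))) ∈ peirce0 e := by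
      rw [dft_comm]
      have h1 := lemB (pZero e (s * rnm (List.replicate k e ++ [t])))
        (s * a + pOne e (s * rnm (List.replicate k e ++ [t]))) (pZero_mem hJordan h2 hid _)
      rw [eq_pZero_of h1.1 h1.2]
      exact pZero_mem hJordan h2 hid _
    have hswmem : s * dft d a t ∈ peirceHalf e := by
      rw [mul_comm]; exact p1h hJordan h2 hid hwmem hs
    exact half_eq_dsum_zero hA'mem hB'mem hswmem htr.symm
  -- (0,½)-defects vanish
  have D0h : ∀ b t : J, b ∈ peirce0 e → t ∈ peirceHalf e → dft d b t = 0 := by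
    intro b t hb ht
    have hparts := lemB b t hb
    have hwe : dft d b t = pZero e (dft d b t) := eq_pZero_of hparts.1 hparts.2
    have hwmem : dft d b t ∈ peirce0 e := by rw [hwe]; exact pZero_mem hJordan h2 hid _
    apply peel0 k _ hwmem
    intro g' hg' hg'mem
    have hNmem : rnm (g' ++ [dft d b t]) ∈ peirce0 e :=
      chain_p0 hJordan h2 hid hg'mem hwmem
    apply hcond1' _ hNmem
    intro s hs
    have hlen : (s :: g').length = k + 1 := by simp [hg']
    have htr := dtr (s :: g') hlen b t
    have hval : ∀ z : J, rnm ((s :: g') ++ [z]) = s * rnm (g' ++ [z]) := by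
      intro z; rw [List.cons_append, rnm_cons _ (by simp)]
    simp only [hval] at htr
    have hPmem : rnm (g' ++ [b]) ∈ peirce0 e := chain_p0 hJordan h2 hid hg'mem hb
    have hQmem : rnm (g' ++ [t]) ∈ peirceHalf e := chain_ph hJordan h2 hid hg'mem ht
    have hXmem : s * rnm (g' ++ [b]) ∈ peirceHalf e := by
      rw [mul_comm]; exact p0h hJordan h2 hid hPmem hs
    have hYph : pHalf e (s * rnm (g' ++ [t])) = 0 := phh hJordan h2 hid hs hQmem
    rw [pair_sum_of_ph hYph, dft_split,
      D10 _ _ (pOne_mem hJordan h2 hid _) (pZero_mem hJordan h2 hid _), sub_zero,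
      dft_comm d (s * rnm (g' ++ [b])) (pOne e (s * rnm (g' ++ [t]))),
      D1h _ _ (pOne_mem hJordan h2 hid _) hXmem, zero_add] at htr
    have hB'mem : dft d (s * rnm (g' ++ [b]) + pOne e (s * rnm (g' ++ [t])))
        (pZero e (s * rnm (g' ++ [t]))) ∈ peirce0 e := by
      rw [dft_comm]
      have h1 := lemB (pZero e (s * rnm (g' ++ [t])))
        (s * rnm (g' ++ [b]) + pOne e (s * rnm (g' ++ [t]))) (pZero_mem hJordan h2 hid _)
      rw [eq_pZero_of h1.1 h1.2]
      exact pZero_mem hJordan h2 hid _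
    have hsNmem : s * rnm (g' ++ [dft d b t]) ∈ peirceHalf e := by
      rw [mul_comm]; exact p0h hJordan h2 hid hNmem hs
    exact half_eq_dsum_zero p1_zero hB'mem hsNmem (by rw [zero_add]; exact htr.symm)
  -- defects of (J₁⊕J₀, J½)-pairs vanish
  have MIX : ∀ x t : J, pHalf e x = 0 → t ∈ peirceHalf e → dft d x t = 0 := by
    intro x t hx ht
    have h1 : pOne e (dft d x t) = 0 ∧ pHalf e (dft d x t) = 0 := by
      apply compE
      rw [← dtr _ (by simp) x t, pair_sum_of_ph hx, rnm_last_add,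
        rep_p1 (k+1) (pOne_mem hJordan h2 hid x), rep_p0 k (pZero_mem hJordan h2 hid x),
        add_zero]
      exact D1h _ _ (pOne_mem hJordan h2 hid x) ((rep_ph hJordan h2 hid (k+1) ht).1)
    have h0 : pHalf e (dft d x t) = 0 ∧ pZero e (dft d x t) = 0 := by
      apply compC
      intro g hg hgmem
      have hne' : g ≠ [] := by intro h'; rw [h'] at hg; simp at hg
      rw [← dtr g hg x t, pair_sum_of_ph hx, rnm_last_add,
        chain_p1 hJordan h2 hid hne' hgmem (pOne_mem hJordan h2 hid x), zero_add]
      exact D0h _ _ (chain_p0 hJordan h2 hid hgmem (pZero_mem hJordan h2 hid x))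
        (chain_ph hJordan h2 hid hgmem ht)
    exact parts_zero h1.1 h0.1 h0.2
  -- the key vanishing: D(J½, J₀·J½) = 0
  have KEY : ∀ w Z c : J, w ∈ peirceHalf e → Z ∈ peirceHalf e → c ∈ peirce0 e →
      dft d w (c * Z) = 0 := by
    intro w Z c hw hZ hc
    have hlen : ((w + w + c) :: List.replicate k e).length = k + 1 := by simp
    have htr := dtr _ hlen ((2^k) • Z) e
    have hval : ∀ z : J, rnm (((w + w + c) :: List.replicate k e) ++ [z])
        = (w + w + c) * rnm (List.replicate k e ++ [z]) := by
      intro z; rw [List.cons_append, rnm_cons _ (by simp)]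
    simp only [hval] at htr
    rw [rep_ph_surj hJordan h2 hid k hZ, rep_e hid k] at htr
    have hdve : dft d ((2^k) • Z) e = 0 := by
      rw [dft_comm]; exact D1h _ _ he1 (ph_nsmul hZ _)
    rw [hdve, rnm_last_zero, mul_zero] at htr
    have hce : c * e = 0 := by rw [mul_comm]; exact hc
    have hwe2 : (w + w + c) * e = w := by
      rw [add_mul, hce, add_zero, mul_comm]
      exact ph_two_L hw
    rw [hwe2, add_mul, add_mul] at htr
    have hP : pHalf e (w*Z + w*Z) = 0 := by
      rw [pHalf_add, phh hJordan h2 hid hw hZ, add_zero]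
    have hC' : c * Z ∈ peirceHalf e := p0h hJordan h2 hid hc hZ
    have hco := dft_cocycle d (w*Z + w*Z) (c*Z) w
    rw [MIX _ _ hP hC', MIX _ _ hP (ph_add' hC' hw), zero_add, add_zero, htr] at hco
    rw [dft_comm]
    exact hco.symm
  -- J₀-pair defects vanish
  have D00 : ∀ b b' : J, b ∈ peirce0 e → b' ∈ peirce0 e → dft d b b' = 0 := by
    intro b b' hb hb'
    have hparts := lemB b b' hb
    have hwmem : dft d b b' ∈ peirce0 e := by
      rw [eq_pZero_of hparts.1 hparts.2]; exact pZero_mem hJordan h2 hid _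
    apply peel0 k _ hwmem
    intro g' hg' hg'mem
    have hNmem := chain_p0 hJordan h2 hid hg'mem hwmem
    apply hcond1' _ hNmem
    intro s hs
    have hlen : (s :: g').length = k + 1 := by simp [hg']
    have htr := dtr (s :: g') hlen b b'
    have hval : ∀ z : J, rnm ((s :: g') ++ [z]) = s * rnm (g' ++ [z]) := by
      intro z; rw [List.cons_append, rnm_cons _ (by simp)]
    simp only [hval] at htr
    rw [mul_comm s (rnm (g' ++ [b']))] at htr
    have hsP : s * rnm (g' ++ [b]) ∈ peirceHalf e := by
      rw [mul_comm]; exact p0h hJordan h2 hid (chain_p0 hJordan h2 hid hg'mem hb) hs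
    rw [KEY _ _ _ hsP hs (chain_p0 hJordan h2 hid hg'mem hb')] at htr
    exact htr.symm
  -- J₁-pair defects vanish
  have D11 : ∀ a a' : J, a ∈ peirce1 e → a' ∈ peirce1 e → dft d a a' = 0 := by
    intro a a' ha ha'
    have hp1 := lemA a a' ha
    have hwmem : dft d a a' ∈ peirce1 e := by
      rw [eq_pOne_of hp1.1 hp1.2]; exact pOne_mem hJordan h2 hid _
    apply hcond1 _ hwmem
    intro s hs
    have hlen : (s :: List.replicate k e).length = k + 1 := by simp
    have htr1 := dtr (s :: List.replicate k e) hlen a a'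
    have hval : ∀ z : J, rnm ((s :: List.replicate k e) ++ [z])
        = s * rnm (List.replicate k e ++ [z]) := by
      intro z; rw [List.cons_append, rnm_cons _ (by simp)]
    simp only [hval] at htr1
    rw [rep_p1 k ha, rep_p1 k ha', rep_p1 k hwmem] at htr1
    have hswh : s * dft d a a' ∈ peirceHalf e := by
      rw [mul_comm]; exact p1h hJordan h2 hid hwmem hs
    have hsR := rep_ph hJordan h2 hid k hswh
    have hkill : rnm (List.replicate k e ++ [s * dft d a a']) = 0 := by
      apply hcond3 _ hsR.1
      intro c hc
      have hlen2 : (c :: List.replicate k e).length = k + 1 := by simp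
      have htr2 := dtr (c :: List.replicate k e) hlen2 (s*a) (s*a')
      have hval2 : ∀ z : J, rnm ((c :: List.replicate k e) ++ [z])
          = c * rnm (List.replicate k e ++ [z]) := by
        intro z; rw [List.cons_append, rnm_cons _ (by simp)]
      simp only [hval2] at htr2
      rw [htr1] at htr2
      have hZ'mem : rnm (List.replicate k e ++ [s*a']) ∈ peirceHalf e :=
        (rep_ph hJordan h2 hid k (by rw [mul_comm]; exact p1h hJordan h2 hid ha' hs)).1
      have hfst : c * rnm (List.replicate k e ++ [s*a]) ∈ peirceHalf e :=
        p0h hJordan h2 hid hc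
          ((rep_ph hJordan h2 hid k (by rw [mul_comm]; exact p1h hJordan h2 hid ha hs)).1)
      rw [KEY _ _ _ hfst hZ'mem hc] at htr2
      exact htr2.symm
    have hfin := hsR.2
    rw [hkill, smul_zero] at hfin
    exact hfin.symm
  -- mixed auxiliary rearrangement consequences
  have D10' : ∀ a b c : J, a ∈ peirce1 e → b ∈ peirce0 e → c ∈ peirce0 e →
      dft d (a + b) c = 0 := by
    intro a b c ha hb hc
    have hco := dft_cocycle d a b c
    rw [D10 _ _ ha hb, D00 _ _ hb hc, D10 _ _ ha (p0_add' hb hc), zero_add, zero_add] at hco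
    exact hco
  -- J₁⊕J₀-pair defects vanish
  have RR : ∀ X Y : J, pHalf e X = 0 → pHalf e Y = 0 → dft d X Y = 0 := by
    intro X Y hX hY
    have hsplitX := pair_sum_of_ph hX
    have hsplitY := pair_sum_of_ph hY
    have h2' : dft d X (pOne e Y) = 0 := by
      rw [dft_comm]
      conv_lhs => rw [hsplitX]
      rw [dft_split, D10 _ _ (pOne_mem hJordan h2 hid _) (pZero_mem hJordan h2 hid _),
        sub_zero, D11 _ _ (pOne_mem hJordan h2 hid _) (pOne_mem hJordan h2 hid _), zero_add]
      exact D10 _ _ (p1_add' (pOne_mem hJordan h2 hid _) (pOne_mem hJordan h2 hid _))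
        (pZero_mem hJordan h2 hid _)
    have h3' : dft d (X + pOne e Y) (pZero e Y) = 0 := by
      have hre : X + pOne e Y = (pOne e X + pOne e Y) + pZero e X := by
        conv_lhs => rw [hsplitX]
        abel
      rw [hre]
      exact D10' _ _ _ (p1_add' (pOne_mem hJordan h2 hid _) (pOne_mem hJordan h2 hid _))
        (pZero_mem hJordan h2 hid _) (pZero_mem hJordan h2 hid _)
    conv_lhs => rw [hsplitY]
    rw [dft_split, D10 _ _ (pOne_mem hJordan h2 hid _) (pZero_mem hJordan h2 hid _),
      sub_zero, h2', h3', add_zero]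
  -- J½-pair defects vanish
  have Dhh : ∀ u v : J, u ∈ peirceHalf e → v ∈ peirceHalf e → dft d u v = 0 := by
    intro u v hu hv
    have hch : ∀ g : List J, g.length = k+1 → (∀ x ∈ g, x ∈ peirce0 e) →
        rnm (g ++ [dft d u v]) = 0 := by
      intro g hg hgmem
      cases g with
      | nil => simp at hg
      | cons c g' =>
        rw [← dtr _ hg u v]
        have hc : c ∈ peirce0 e := hgmem c (by simp)
        have hg'mem : ∀ x ∈ g', x ∈ peirce0 e := fun x hx => hgmem x (by simp [hx])
        simp only [List.cons_append]
        rw [rnm_cons c (show g' ++ [u] ≠ [] by simp), rnm_cons c (show g' ++ [v] ≠ [] by simp)]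
        exact KEY _ _ _ (p0h hJordan h2 hid hc (chain_ph hJordan h2 hid hg'mem hu))
          (chain_ph hJordan h2 hid hg'mem hv) hc
    have hcmp := compC _ hch
    have hwmem : dft d u v ∈ peirce1 e := by
      rw [eq_pOne_of hcmp.1 hcmp.2]; exact pOne_mem hJordan h2 hid _
    apply hcond1 _ hwmem
    intro s hs
    have hlen : (s :: List.replicate k e).length = k + 1 := by simp
    have htr := dtr (s :: List.replicate k e) hlen u v
    have hval : ∀ z : J, rnm ((s :: List.replicate k e) ++ [z])
        = s * rnm (List.replicate k e ++ [z]) := by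
      intro z; rw [List.cons_append, rnm_cons _ (by simp)]
    simp only [hval] at htr
    rw [rep_p1 k hwmem] at htr
    rw [RR _ _ (phh hJordan h2 hid hs (rep_ph hJordan h2 hid k hu).1)
      (phh hJordan h2 hid hs (rep_ph hJordan h2 hid k hv).1)] at htr
    exact htr.symm
  -- d splits along the Peirce decomposition
  have dsum : ∀ x : J, d x = d (pOne e x) + d (pHalf e x) + d (pZero e x) := by
    intro x
    have hW : dft d (pOne e x + pHalf e x) (pZero e x) = 0 := by
      have hE : pOne e (dft d (pOne e x + pHalf e x) (pZero e x)) = 0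
          ∧ pHalf e (dft d (pOne e x + pHalf e x) (pZero e x)) = 0 := by
        apply compE
        rw [← dtr _ (by simp) _ _, rep_p0 k (pZero_mem hJordan h2 hid x)]
        exact dft0r _
      have hC : pHalf e (dft d (pOne e x + pHalf e x) (pZero e x)) = 0
          ∧ pZero e (dft d (pOne e x + pHalf e x) (pZero e x)) = 0 := by
        apply compC
        intro g hg hgmem
        have hne' : g ≠ [] := by intro h'; rw [h'] at hg; simp at hg
        rw [← dtr g hg _ _, rnm_last_add,
          chain_p1 hJordan h2 hid hne' hgmem (pOne_mem hJordan h2 hid x), zero_add, dft_comm]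
        exact D0h _ _ (chain_p0 hJordan h2 hid hgmem (pZero_mem hJordan h2 hid x))
          (chain_ph hJordan h2 hid hgmem (pHalf_mem hJordan h2 hid x))
      exact parts_zero hE.1 hC.1 hC.2
    have h1 : d (pOne e x + pHalf e x) = d (pOne e x) + d (pHalf e x) :=
      add_of_dft_zero (D1h _ _ (pOne_mem hJordan h2 hid x) (pHalf_mem hJordan h2 hid x))
    calc d x = d ((pOne e x + pHalf e x) + pZero e x) := by rw [pSum e x]
      _ = d (pOne e x + pHalf e x) + d (pZero e x) := add_of_dft_zero hW
      _ = d (pOne e x) + d (pHalf e x) + d (pZero e x) := by rw [h1]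
  -- conclusion
  intro a b
  have h1 := dsum (a + b)
  rw [pOne_add, pHalf_add, pZero_add,
    add_of_dft_zero (D11 _ _ (pOne_mem hJordan h2 hid a) (pOne_mem hJordan h2 hid b)),
    add_of_dft_zero (Dhh _ _ (pHalf_mem hJordan h2 hid a) (pHalf_mem hJordan h2 hid b)),
    add_of_dft_zero (D00 _ _ (pZero_mem hJordan h2 hid a) (pZero_mem hJordan h2 hid b))] at h1
  rw [h1, dsum a, dsum b]
  abel
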